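/- Let V be a linear subspace of polynomials over a finite field F and R ∈ ℕ. If V is homogeneous (spanned by forms), then U_R(V) = Span{X ∈ V : rk(X) < R} is also homogeneous. -/

import Mathlib

open MvPolynomial
open scoped BigOperators

namespace PaperDefs

variable (F : Type) [Field F] [Fintype F] [DecidableEq F]

/-- A multivariate polynomial is *reduced* if every variable occurs with degree at most `|F| - 1`.
Over a finite field, every function `F^n → F` has a unique reduced polynomial representative. -/
def ReducedPoly {n : ℕ} (P : MvPolynomial (Fin n) F) : Prop :=
  ∀ i, P.degreeOf i ≤ Fintype.card F - 1

/-- `P` represents the function `f`. -/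
def Represents {n : ℕ} (P : MvPolynomial (Fin n) F) (f : (Fin n → F) → F) : Prop :=
  ∀ x, MvPolynomial.eval x P = f x

/-- Degree of a polynomial function: total degree of its (unique) reduced representative. -/
noncomputable def degF {n : ℕ} (f : (Fin n → F) → F) : ℕ :=
  sInf {d | ∃ P : MvPolynomial (Fin n) F, ReducedPoly F P ∧ Represents F P f ∧ P.totalDegree = d}

/-- `f` is a form (homogeneous polynomial function) of degree `d ≥ 1`. -/
def IsFormOfDegree {n : ℕ} (f : (Fin n → F) → F) (d : ℕ) : Prop :=
  0 < d ∧ ∃ P : MvPolynomial (Fin n) F, P ≠ 0 ∧ ReducedPoly F P ∧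
    P.IsHomogeneous d ∧ Represents F P f

/-- `f` is a form: a homogeneous polynomial function of positive degree. -/
def IsForm {n : ℕ} (f : (Fin n → F) → F) : Prop := ∃ d, IsFormOfDegree F f d

/-- A function is non-constant. -/
def NonConstantFn {α β : Type*} (f : α → β) : Prop := ¬ ∃ c, ∀ x, f x = c

/-- A polynomial function is reducible if it is a product of two non-constant polynomial
functions. -/
def ReduciblePoly {n : ℕ} (f : (Fin n → F) → F) : Prop :=
  ∃ g h : (Fin n → F) → F, NonConstantFn g ∧ NonConstantFn h ∧ ∀ x, f x = g x * h x

/-- Rank of a form of degree `d`: the least `r` such that the form is a sum of `r` reducible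
forms of degree `d`; `∞` for `d ≤ 1`. -/
noncomputable def rkFormD {n : ℕ} (d : ℕ) (f : (Fin n → F) → F) : ℕ∞ :=
  if d ≤ 1 then ⊤ else
    sInf {r : ℕ∞ | ∃ k : ℕ, r = (k : ℕ∞) ∧ ∃ R : Fin k → (Fin n → F) → F,
      (∀ i, IsFormOfDegree F (R i) d ∧ ReduciblePoly F (R i)) ∧ ∀ x, f x = ∑ i, R i x}

/-- Rank of a general polynomial function: the rank of the highest-degree homogeneous part of
its reduced representative (`0` for constants). -/
noncomputable def rkFun {n : ℕ} (f : (Fin n → F) → F) : ℕ∞ :=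
  sInf {r : ℕ∞ | ∃ P : MvPolynomial (Fin n) F, ReducedPoly F P ∧ Represents F P f ∧
    r = if P.totalDegree = 0 then 0 else
      rkFormD F P.totalDegree
        (fun x => MvPolynomial.eval x ((MvPolynomial.homogeneousComponent P.totalDegree) P))}

/-- `U_R(V)`: the span of the polynomials in `V` of rank less than `R`. -/
noncomputable def lowRankSpan {n : ℕ} (V : Submodule F ((Fin n → F) → F)) (R : ℕ) :
    Submodule F ((Fin n → F) → F) :=
  Submodule.span F {f | f ∈ V ∧ rkFun F f < (R : ℕ∞)}

/-- Degree of a subspace of polynomial functions: the largest degree of any of its members. -/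
noncomputable def degSub {n : ℕ} (W : Submodule F ((Fin n → F) → F)) : ℕ :=
  sSup (degF F '' (W : Set ((Fin n → F) → F)))

/-- A subspace of polynomial functions is homogeneous if it is spanned by forms. -/
def IsHomogeneousSub {n : ℕ} (W : Submodule F ((Fin n → F) → F)) : Prop :=
  ∃ S : Set ((Fin n → F) → F), (∀ f ∈ S, IsForm F f) ∧ W = Submodule.span F S

/-- `V^↑`: the top-degree homogeneous component of `V` (the subspace consisting of `0`
together with the forms in `V` of degree `deg(V)`). -/
noncomputable def topComponent {n : ℕ} (V : Submodule F ((Fin n → F) → F)) :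
    Submodule F ((Fin n → F) → F) :=
  Submodule.span F {f | f ∈ V ∧ IsFormOfDegree F f (degSub F V)}

/-- `f ∈ F[X]`: `f` is a polynomial expression in `X₁, …, X_k`. -/
def InAlg {n k : ℕ} (X : Fin k → (Fin n → F) → F) (f : (Fin n → F) → F) : Prop :=
  ∃ G : MvPolynomial (Fin k) F, ∀ x, MvPolynomial.eval (fun i => X i x) G = f x

/-- `Pr[X = y]` over a uniformly random input of `F^n`. -/
noncomputable def prEq {n k : ℕ} (X : Fin k → (Fin n → F) → F) (y : Fin k → F) : ℝ :=
  (Nat.card {x : Fin n → F // ∀ i, X i x = y i} : ℝ) / (Fintype.card F : ℝ) ^ n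

/-- `Pr[X ∈ S]` over a uniformly random input of `F^n`. -/
noncomputable def prMem {n k : ℕ} (X : Fin k → (Fin n → F) → F) (S : Set (Fin k → F)) : ℝ :=
  (Nat.card {x : Fin n → F // (fun i => X i x) ∈ S} : ℝ) / (Fintype.card F : ℝ) ^ n

/-- A tuple `X = (X₀, X₁, …, X_k)` of forms is weak `ε`-regular: `X₀` has maximal degree and
for every `y`, `|Pr[X = y] - q⁻¹ Pr[X' = y']| ≤ ε q^{-(k+1)}`, where `X' = (X₁, …, X_k)`. -/
def WeakRegular {n k : ℕ} (ε : ℝ) (X : Fin (k + 1) → (Fin n → F) → F) : Prop :=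
  (∀ i, IsForm F (X i)) ∧
  (∀ i, degF F (X i) ≤ degF F (X 0)) ∧
  ∀ y : Fin (k + 1) → F,
    |prEq F X y -
      (Fintype.card F : ℝ)⁻¹ * prEq F (fun i : Fin k => X i.succ) (fun i : Fin k => y i.succ)|
      ≤ ε / (Fintype.card F : ℝ) ^ (k + 1)

/-- The bias of a polynomial function with respect to an additive character `χ`. -/
noncomputable def biasF {n : ℕ} (χ : AddChar F ℂ) (f : (Fin n → F) → F) : ℂ :=
  (∑ x : Fin n → F, χ (f x)) / (Fintype.card F : ℂ) ^ n

/-- A tuple of forms `X = (X₁, …, X_r)` is `t`-rank-regular: every element of `Span(X)`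
outside of some strict subspace has rank at least `t · r`. -/
def RankRegular {n r : ℕ} (t : ℕ) (X : Fin r → (Fin n → F) → F) : Prop :=
  ∃ U : Submodule F ((Fin n → F) → F), U < Submodule.span F (Set.range X) ∧
    ∀ f ∈ Submodule.span F (Set.range X), f ∉ U → ((t * r : ℕ) : ℕ∞) ≤ rkFun F f

/-- `P ⊆ F[X]` is a minimal decomposition: no strict subspace of `Span(X)` spanned by forms
generates `P`. -/
def MinimalDecomp {n m r : ℕ} (P : Fin m → (Fin n → F) → F)
    (X : Fin r → (Fin n → F) → F) : Prop :=
  (∀ i, InAlg F X (P i)) ∧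
  ∀ (k : ℕ) (Y : Fin k → (Fin n → F) → F), (∀ j, IsForm F (Y j)) →
    Submodule.span F (Set.range Y) < Submodule.span F (Set.range X) →
    ¬ ∀ i, InAlg F Y (P i)

/-- Degree of a univariate polynomial function: the degree of its reduced representative
(in which the variable has degree at most `|F| - 1`). -/
noncomputable def degU (u : F → F) : ℕ :=
  sInf {d | ∃ p : Polynomial F, p.natDegree ≤ Fintype.card F - 1 ∧ (∀ x, p.eval x = u x) ∧
    p.natDegree = d}

/-- Univariate degree of a polynomial map `P : F^n → F^m`: the minimum degree of a
non-constant univariate polynomial curve whose image is contained in the image of `P`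
(`∞` if no such curve exists, e.g. for constant maps). -/
noncomputable def udeg {n m : ℕ} (P : Fin m → (Fin n → F) → F) : ℕ∞ :=
  sInf {d : ℕ∞ | ∃ U : Fin m → F → F,
    NonConstantFn (fun t => fun i => U i t) ∧
    Set.range (fun t => fun i => U i t) ⊆ Set.range (fun x => fun i => P i x) ∧
    d = ((Finset.univ.sup fun i => degU F (U i) : ℕ) : ℕ∞)}

/-- Univariate degree of a single polynomial function `P : F^n → F`. -/
noncomputable def udeg1 {n : ℕ} (f : (Fin n → F) → F) : ℕ∞ :=
  sInf {d : ℕ∞ | ∃ u : F → F, NonConstantFn u ∧ Set.range u ⊆ Set.range f ∧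
    d = ((degU F u : ℕ) : ℕ∞)}

/-- `f` is `t`-reducible: a product of polynomial functions each of degree at most `t`. -/
def TReducible {n : ℕ} (t : ℝ) (f : (Fin n → F) → F) : Prop :=
  ∃ (s : ℕ) (g : Fin s → (Fin n → F) → F), (∀ j, (degF F (g j) : ℝ) ≤ t) ∧
    ∀ x, f x = ∏ j, g j x

/-- The line in `F^(k+1)` through `z` in direction `e₁`. -/
def lineE1 {k : ℕ} (z : Fin (k + 1) → F) : Set (Fin (k + 1) → F) :=
  {y | ∃ t : F, y = t • (Pi.single (0 : Fin (k + 1)) (1 : F) : Fin (k + 1) → F) + z}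


set_option linter.unusedSectionVars false

section Aux

variable {F}
variable {n : ℕ}

lemma reducedPoly_iff_mem {P : MvPolynomial (Fin n) F} :
    ReducedPoly F P ↔ P ∈ restrictDegree (Fin n) F (Fintype.card F - 1) := by
  rw [mem_restrictDegree_iff_sup]
  unfold ReducedPoly
  simp_rw [degreeOf_def]

lemma exists_reduced_rep (f : (Fin n → F) → F) :
    ∃ P : MvPolynomial (Fin n) F, ReducedPoly F P ∧ Represents F P f := by
  have h : f ∈ (restrictDegree (Fin n) F (Fintype.card F - 1)).map
      (MvPolynomial.evalₗ F (Fin n)) := by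
    rw [MvPolynomial.map_restrict_dom_evalₗ]; trivial
  obtain ⟨P, hP, hPf⟩ := h
  exact ⟨P, reducedPoly_iff_mem.mpr hP, fun x => by simpa using congrFun hPf x⟩

lemma reduced_rep_unique {P Q : MvPolynomial (Fin n) F} (hP : ReducedPoly F P)
    (hQ : ReducedPoly F Q) (h : ∀ x, eval x P = eval x Q) : P = Q := by
  have h0 : P - Q = 0 :=
    MvPolynomial.eq_zero_of_eval_eq_zero (Fin n) F (P - Q)
      (fun v => by rw [map_sub, h v, sub_self])
      (Submodule.sub_mem _ (reducedPoly_iff_mem.mp hP) (reducedPoly_iff_mem.mp hQ))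
  exact sub_eq_zero.mp h0

noncomputable def repOf (f : (Fin n → F) → F) : MvPolynomial (Fin n) F :=
  Classical.choose (exists_reduced_rep f)

lemma repOf_reduced (f : (Fin n → F) → F) : ReducedPoly F (repOf f) :=
  (Classical.choose_spec (exists_reduced_rep f)).1

lemma repOf_represents (f : (Fin n → F) → F) : Represents F (repOf f) f :=
  (Classical.choose_spec (exists_reduced_rep f)).2

lemma eq_repOf {P : MvPolynomial (Fin n) F} {f : (Fin n → F) → F}
    (hP : ReducedPoly F P) (h : Represents F P f) : P = repOf f :=
  reduced_rep_unique hP (repOf_reduced f) (fun x => by rw [h x, repOf_represents f x])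

lemma repOf_add (f g : (Fin n → F) → F) : repOf (f + g) = repOf f + repOf g := by
  refine (eq_repOf ?_ ?_).symm
  · intro i
    exact le_trans (degreeOf_add_le i _ _) (max_le (repOf_reduced f i) (repOf_reduced g i))
  · intro x
    rw [map_add, repOf_represents f x, repOf_represents g x]
    rfl

lemma repOf_smul (c : F) (f : (Fin n → F) → F) : repOf (c • f) = c • repOf f := by
  refine (eq_repOf ?_ ?_).symm
  · intro i
    rw [smul_eq_C_mul]
    exact le_trans (degreeOf_C_mul_le _ _ _) (repOf_reduced f i)
  · intro x
    rw [smul_eq_C_mul, map_mul, eval_C, repOf_represents f x]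
    rfl

lemma repOf_zero : repOf (0 : (Fin n → F) → F) = 0 :=
  (eq_repOf (fun i => by simp) (fun x => by simp)).symm

/-- The degree-`d` homogeneous component of a polynomial function. -/
noncomputable def compFn (d : ℕ) (f : (Fin n → F) → F) : (Fin n → F) → F :=
  fun x => eval x (homogeneousComponent d (repOf f))

lemma reduced_homogeneousComponent {P : MvPolynomial (Fin n) F} (hP : ReducedPoly F P)
    (d : ℕ) : ReducedPoly F (homogeneousComponent d P) := by
  intro i
  rw [degreeOf_le_iff]
  intro m hm
  have hm' : m ∈ P.support := by
    rw [mem_support_iff] at hm ⊢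
    rw [coeff_homogeneousComponent] at hm
    by_cases h : Finsupp.degree m = d
    · simpa [h] using hm
    · simp [h] at hm
  exact degreeOf_le_iff.mp (hP i) m hm'

lemma compFn_represents (d : ℕ) (f : (Fin n → F) → F) :
    Represents F (homogeneousComponent d (repOf f)) (compFn d f) := fun _ => rfl

lemma compFn_add (d : ℕ) (f g : (Fin n → F) → F) :
    compFn d (f + g) = compFn d f + compFn d g := by
  funext x
  simp [compFn, repOf_add, map_add]

lemma compFn_smul (d : ℕ) (c : F) (f : (Fin n → F) → F) :
    compFn d (c • f) = c • compFn d f := by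
  funext x
  simp [compFn, repOf_smul, map_smul, smul_eq_C_mul]

lemma compFn_zero (d : ℕ) : compFn d (0 : (Fin n → F) → F) = 0 := by
  funext x
  simp [compFn, repOf_zero]

lemma compFn_isForm {g : (Fin n → F) → F} {e : ℕ} (hg : IsFormOfDegree F g e) (d : ℕ) :
    compFn d g = if d = e then g else 0 := by
  obtain ⟨he, P, hP0, hPred, hPhom, hPrep⟩ := hg
  have hrep : P = repOf g := eq_repOf hPred hPrep
  have hmem : P ∈ homogeneousSubmodule (Fin n) F e :=
    (mem_homogeneousSubmodule _ _).mpr hPhom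
  by_cases h : d = e
  · subst h
    simp only [if_pos rfl]
    funext x
    rw [compFn, ← hrep, homogeneousComponent_of_mem hmem, if_pos rfl]
    exact hPrep x
  · simp only [if_neg h]
    funext x
    rw [compFn, ← hrep, homogeneousComponent_of_mem hmem, if_neg h]
    simp

lemma compFn_mem_span {S : Set ((Fin n → F) → F)} (hS : ∀ g ∈ S, IsForm F g) (d : ℕ)
    {f : (Fin n → F) → F} (hf : f ∈ Submodule.span F S) :
    compFn d f ∈ Submodule.span F S := by
  induction hf using Submodule.span_induction with
  | mem g hg =>
    obtain ⟨e, hge⟩ := hS g hg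
    rw [compFn_isForm hge]
    split
    · exact Submodule.subset_span hg
    · exact zero_mem _
  | zero => rw [compFn_zero]; exact zero_mem _
  | add a b _ _ ha hb => rw [compFn_add]; exact add_mem ha hb
  | smul c a _ ha => rw [compFn_smul]; exact Submodule.smul_mem _ _ ha

lemma compFn_zero_of_mem_span {S : Set ((Fin n → F) → F)} (hS : ∀ g ∈ S, IsForm F g)
    {f : (Fin n → F) → F} (hf : f ∈ Submodule.span F S) : compFn 0 f = 0 := by
  induction hf using Submodule.span_induction with
  | mem g hg =>
    obtain ⟨e, hge⟩ := hS g hg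
    have he := hge.1
    rw [compFn_isForm hge, if_neg (by omega : ¬ (0 = e))]
  | zero => exact compFn_zero 0
  | add a b _ _ ha hb => rw [compFn_add, ha, hb, add_zero]
  | smul c a _ ha => rw [compFn_smul, ha, smul_zero]

lemma sum_compFn (f : (Fin n → F) → F) :
    f = ∑ d ∈ Finset.range ((repOf f).totalDegree + 1), compFn d f := by
  funext x
  have h1 : f x = eval x (repOf f) := (repOf_represents f x).symm
  rw [h1]
  conv_lhs => rw [← sum_homogeneousComponent (repOf f)]
  rw [map_sum]
  simp [compFn]

lemma rkFun_eq (f : (Fin n → F) → F) :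
    rkFun F f = if (repOf f).totalDegree = 0 then 0 else
      rkFormD F (repOf f).totalDegree
        (fun x => eval x (homogeneousComponent (repOf f).totalDegree (repOf f))) := by
  have hset : {r : ℕ∞ | ∃ P : MvPolynomial (Fin n) F, ReducedPoly F P ∧ Represents F P f ∧
      r = if P.totalDegree = 0 then 0 else
        rkFormD F P.totalDegree
          (fun x => MvPolynomial.eval x ((MvPolynomial.homogeneousComponent P.totalDegree) P))} =
      {if (repOf f).totalDegree = 0 then 0 else
        rkFormD F (repOf f).totalDegree
          (fun x => eval x (homogeneousComponent (repOf f).totalDegree (repOf f)))} := by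
    ext r
    simp only [Set.mem_setOf_eq, Set.mem_singleton_iff]
    constructor
    · rintro ⟨P, hPr, hPf, rfl⟩
      rw [eq_repOf hPr hPf]
    · intro h
      exact ⟨repOf f, repOf_reduced f, repOf_represents f, h⟩
  rw [rkFun, hset, sInf_singleton]

lemma exists_top_monomial {P : MvPolynomial (Fin n) F} (hP : P ≠ 0) :
    ∃ m ∈ P.support, Finsupp.degree m = P.totalDegree ∧ coeff m P ≠ 0 := by
  obtain ⟨m, hm, hdeg⟩ := Finset.exists_mem_eq_sup P.support
    (Finset.nonempty_iff_ne_empty.mpr (fun h => hP (MvPolynomial.support_eq_empty.mp h))) (fun s => s.sum fun _ e => e)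
  refine ⟨m, hm, ?_, mem_support_iff.mp hm⟩
  rw [MvPolynomial.totalDegree, hdeg]
  rfl

lemma compFn_isForm_of_ne {f : (Fin n → F) → F} (d : ℕ) (hd : 0 < d)
    (hne : compFn d f ≠ 0) : IsForm F (compFn d f) := by
  refine ⟨d, hd, homogeneousComponent d (repOf f), ?_,
    reduced_homogeneousComponent (repOf_reduced f) d,
    homogeneousComponent_isHomogeneous d _, fun x => rfl⟩
  intro h
  exact hne (funext fun x => by simp [compFn, h])

lemma compFn_mem_lowRankSpan {S : Set ((Fin n → F) → F)} (hS : ∀ g ∈ S, IsForm F g)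
    {R : ℕ} {f : (Fin n → F) → F} (hf : f ∈ Submodule.span F S)
    (hrk : rkFun F f < (R : ℕ∞)) (d : ℕ) :
    compFn d f ∈ lowRankSpan F (Submodule.span F S) R := by
  by_cases hzero : compFn d f = 0
  · rw [hzero]; exact zero_mem _
  have hdD : d ≤ (repOf f).totalDegree := by
    by_contra h
    exact hzero (funext fun x => by
      simp [compFn, homogeneousComponent_eq_zero _ _ (lt_of_not_ge h)])
  have hD0 : (repOf f).totalDegree ≠ 0 := by
    intro h
    have hd0 : d = 0 := by omega
    exact hzero (hd0 ▸ compFn_zero_of_mem_span hS hf)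
  set P := repOf f with hPdef
  set D := P.totalDegree with hDdef
  have hrkf : rkFun F f = rkFormD F D (compFn D f) := by
    rw [rkFun_eq]
    rw [if_neg hD0]
    rfl
  have hPne : P ≠ 0 := fun h => hD0 (by rw [hDdef, h, totalDegree_zero])
  obtain ⟨m, hmsup, hmdeg, hmco⟩ := exists_top_monomial hPne
  rw [← hDdef] at hmdeg
  set HD := homogeneousComponent D P with hHD
  have hHDhom : HD.IsHomogeneous D := homogeneousComponent_isHomogeneous D P
  have hHDcoeff : coeff m HD = coeff m P := by
    rw [hHD, coeff_homogeneousComponent, if_pos hmdeg]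
  have hHDne : HD ≠ 0 := by
    intro h
    rw [h, coeff_zero] at hHDcoeff
    exact hmco hHDcoeff.symm
  have hHDred : ReducedPoly F HD := reduced_homogeneousComponent (repOf_reduced f) D
  have hHDtd : HD.totalDegree = D := hHDhom.totalDegree hHDne
  have hgD_rep : repOf (compFn D f) = HD := (eq_repOf hHDred (fun _ => rfl)).symm
  have hHDmem : HD ∈ homogeneousSubmodule (Fin n) F D :=
    (mem_homogeneousSubmodule _ _).mpr hHDhom
  have hgD_rk : rkFun F (compFn D f) = rkFormD F D (compFn D f) := by
    rw [rkFun_eq, hgD_rep, hHDtd, if_neg hD0, homogeneousComponent_of_mem hHDmem, if_pos rfl]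
    rfl
  have hgD_mem : compFn D f ∈ {g | g ∈ Submodule.span F S ∧ rkFun F g < (R:ℕ∞)} :=
    ⟨compFn_mem_span hS D hf, by rw [hgD_rk, ← hrkf]; exact hrk⟩
  rcases eq_or_lt_of_le hdD with heq | hlt
  · rw [heq]
    exact Submodule.subset_span hgD_mem
  · set Hd := homogeneousComponent d P with hHd
    have hHdhom : Hd.IsHomogeneous d := homogeneousComponent_isHomogeneous d P
    have hHdne : Hd ≠ 0 := by
      intro h
      exact hzero (funext fun x => by simp [compFn, ← hPdef, ← hHd, h])
    have hHdred : ReducedPoly F Hd := reduced_homogeneousComponent (repOf_reduced f) d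
    have hHdtd : Hd.totalDegree = d := hHdhom.totalDegree hHdne
    have hHdmem : Hd ∈ homogeneousSubmodule (Fin n) F d :=
      (mem_homogeneousSubmodule _ _).mpr hHdhom
    set f' := compFn D f + compFn d f with hf'
    have hrepf' : repOf f' = HD + Hd := by
      refine (eq_repOf ?_ ?_).symm
      · intro i
        exact le_trans (degreeOf_add_le i _ _) (max_le (hHDred i) (hHdred i))
      · intro x
        rw [map_add]
        rfl
    have htd' : (HD + Hd).totalDegree = D := by
      apply le_antisymm
      · exact le_trans (totalDegree_add _ _) (max_le hHDtd.le (hHdtd.le.trans hlt.le))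
      · have hco : coeff m (HD + Hd) ≠ 0 := by
          rw [coeff_add, hHDcoeff, hHdhom.coeff_eq_zero (by rw [hmdeg]; omega), add_zero]
          exact hmco
        have := le_totalDegree (mem_support_iff.mpr hco)
        calc D = Finsupp.degree m := hmdeg.symm
          _ = m.sum fun _ e => e := rfl
          _ ≤ (HD + Hd).totalDegree := this
    have hcompD' : homogeneousComponent D (HD + Hd) = HD := by
      rw [map_add, homogeneousComponent_of_mem hHDmem, if_pos rfl,
        homogeneousComponent_of_mem hHdmem, if_neg (by omega : ¬ (D = d)), add_zero]
    have hrk' : rkFun F f' < (R : ℕ∞) := by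
      rw [rkFun_eq, hrepf', htd', if_neg hD0, hcompD']
      have h2 : rkFormD F D (compFn D f) < (R : ℕ∞) := by rw [← hrkf]; exact hrk
      exact h2
    have hf'mem : f' ∈ {g | g ∈ Submodule.span F S ∧ rkFun F g < (R:ℕ∞)} :=
      ⟨add_mem (compFn_mem_span hS D hf) (compFn_mem_span hS d hf), hrk'⟩
    have hsub : compFn d f = f' - compFn D f := by
      rw [hf', add_sub_cancel_left]
    rw [hsub]
    exact sub_mem (Submodule.subset_span hf'mem) (Submodule.subset_span hgD_mem)

end Aux


/-- If `V` is homogeneous (spanned by forms), then so is `U_R(V)`. -/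
theorem lowRankSpan_homogeneous (n R : ℕ) (V : Submodule F ((Fin n → F) → F))
    (hV : IsHomogeneousSub F V) :
    IsHomogeneousSub F (lowRankSpan F V R) := by
  obtain ⟨S, hS, hVeq⟩ := hV
  subst hVeq
  refine ⟨{g | g ∈ lowRankSpan F (Submodule.span F S) R ∧ IsForm F g},
    fun g hg => hg.2, ?_⟩
  apply le_antisymm
  · rw [lowRankSpan, Submodule.span_le]
    rintro f ⟨hfV, hfrk⟩
    have hdecomp := sum_compFn f
    rw [hdecomp]
    refine Submodule.sum_mem _ fun d _ => ?_
    by_cases hz : compFn d f = 0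
    · rw [hz]; exact zero_mem _
    have hd0 : 0 < d := by
      rcases Nat.eq_zero_or_pos d with h | h
      · exact absurd (h ▸ compFn_zero_of_mem_span hS hfV) hz
      · exact h
    exact Submodule.subset_span
      ⟨compFn_mem_lowRankSpan hS hfV hfrk d, compFn_isForm_of_ne d hd0 hz⟩
  · rw [Submodule.span_le]
    rintro g ⟨hg, -⟩
    exact hg


end PaperDefs
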